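/- Let F be a field of characteristic ≠ 2, d ≥ 3, q ∈ F nonzero with q^i ≠ 1 for 1 ≤ i ≤ d and q^{d−1} = −1. With θ̃_i(ζ) defined as in the type-I deformation (θ̃_i(ζ) = θ_0 + K_i(ζ)), for 1 ≤ i ≤ d the sum ϑ_i := Σ_{ℓ=0}^{i−1} (θ̃_ℓ(ζ) − θ̃_{d−ℓ}(ζ))/(θ̃_0(ζ) − θ̃_d(ζ)) equals (q^i − 1)(q^{i−2} + 1)/(q^{i−2}(q² − 1)), independently of ζ. -/

import Mathlib

set_option maxHeartbeats 1000000 in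
lemma sum_aux12 {F : Type*} [Field F] (q : F) (hq : q ≠ 0) (hq1 : q - 1 ≠ 0) :
    ∀ i : ℕ, ∑ ℓ ∈ Finset.range i, (q ^ ℓ + q * (q ^ ℓ)⁻¹)
      = (q ^ i - 1) * (1 + q ^ 2 * (q ^ i)⁻¹) / (q - 1) := by
  intro i
  induction i with
  | zero => simp
  | succ n ih =>
    rw [Finset.sum_range_succ, ih, pow_succ]
    have ha : (q : F) ^ n ≠ 0 := pow_ne_zero _ hq
    field_simp
    ring

set_option maxHeartbeats 2000000 in
theorem stmt12 (F : Type*) [Field F] (d : ℕ) (hd : 3 ≤ d)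
    (hchar : (2 : F) ≠ 0)
    (q θ0 θd as0 θs0 : F) (hq : q ≠ 0)
    (hq1 : ∀ i : ℕ, 1 ≤ i → i ≤ d → q ^ i ≠ 1)
    (hqd : q ^ (d - 1) = -1)
    (hθ : θ0 ≠ θd) (ha : as0 ≠ θs0)
    (K : ℕ → F → F)
    (hK : ∀ (i : ℕ) (ζ : F), K i ζ =
      -((q ^ i - 1) / (2 * q ^ ((i : ℤ) - 1) * (q ^ 2 - 1) * (as0 - θs0))) *
        ((q + 1) * (q ^ ((i : ℤ) - 1) + 1) * ζ
          - (q - 1) * (q ^ ((i : ℤ) - 1) - 1) * (as0 - θs0) * (θ0 - θd)))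
    (θt : ℕ → F → F)
    (hθt : ∀ (i : ℕ) (ζ : F), θt i ζ = θ0 + K i ζ) :
    ∀ i : ℕ, 1 ≤ i → i ≤ d → ∀ ζ : F,
      (∑ ℓ ∈ Finset.range i, (θt ℓ ζ - θt (d - ℓ) ζ) / (θt 0 ζ - θt d ζ))
        = (q ^ i - 1) * (q ^ ((i : ℤ) - 2) + 1) / (q ^ ((i : ℤ) - 2) * (q ^ 2 - 1)) := by
  intro i hi1 hid ζ
  have hs : as0 - θs0 ≠ 0 := sub_ne_zero.mpr ha
  have hts : θ0 - θd ≠ 0 := sub_ne_zero.mpr hθ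
  have hq2 : q ^ 2 - 1 ≠ 0 := sub_ne_zero.mpr (hq1 2 one_le_two (by omega))
  have hqm : q - 1 ≠ 0 := by
    have h := hq1 1 le_rfl (by omega)
    rw [pow_one] at h
    exact sub_ne_zero.mpr h
  have hqp : q + 1 ≠ 0 := by
    intro h
    apply hq2
    have hqe : q = -1 := by linear_combination h
    rw [hqe]; ring
  have hqdz : q ^ ((d:ℤ) - 1) = -1 := by
    have e : ((d:ℤ) - 1) = ((d - 1 : ℕ) : ℤ) := by
      have : 1 ≤ d := by omega
      push_cast [Nat.cast_sub this]; ring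
    rw [e, zpow_natCast, hqd]
  have hqdn : q ^ d = -q := by
    have e : d = (d - 1) + 1 := by omega
    rw [e, pow_succ, hqd]; ring
  have hK0 : K 0 ζ = 0 := by rw [hK]; norm_num
  have hDd : (2 * (-1 : F) * (q ^ 2 - 1) * (as0 - θs0)) ≠ 0 :=
    mul_ne_zero (mul_ne_zero (mul_ne_zero hchar (neg_ne_zero.mpr one_ne_zero)) hq2) hs
  have hKd : K d ζ = -(θ0 - θd) := by
    rw [hK, hqdz, hqdn]
    apply mul_left_cancel₀ hDd
    linear_combination (-(-q - 1) * ((q + 1) * (-1 + 1) * ζ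
        - (q - 1) * (-1 - 1) * (as0 - θs0) * (θ0 - θd))) * (mul_inv_cancel₀ hDd)
  have hden : θt 0 ζ - θt d ζ = θ0 - θd := by
    rw [hθt, hθt, hK0, hKd]; ring
  have hterm : ∀ ℓ ∈ Finset.range i,
      (θt ℓ ζ - θt (d - ℓ) ζ) / (θt 0 ζ - θt d ζ)
        = (q ^ ℓ + q * (q ^ ℓ)⁻¹) / (q + 1) := by
    intro ℓ hℓ
    have hℓd : ℓ ≤ d := le_trans (Nat.le_of_lt_succ (Nat.lt_succ_of_lt (Finset.mem_range.mp hℓ))) hid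
    have haℓ : q ^ ℓ ≠ 0 := pow_ne_zero _ hq
    have hpow1 : q ^ ((ℓ:ℤ) - 1) = q ^ ℓ * q⁻¹ := by
      rw [zpow_sub₀ hq, zpow_one, zpow_natCast, div_eq_mul_inv]
    have hpow2 : q ^ (((d - ℓ : ℕ):ℤ) - 1) = -(q ^ ℓ)⁻¹ := by
      have e : (((d - ℓ : ℕ):ℤ) - 1) = ((d:ℤ) - 1) + (-(ℓ:ℤ)) := by
        push_cast [Nat.cast_sub hℓd]; ring
      rw [e, zpow_add₀ hq, hqdz, zpow_neg, zpow_natCast]; ring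
    have hpow3 : q ^ (d - ℓ) = -(q * (q ^ ℓ)⁻¹) := by
      rw [pow_sub₀ q hq hℓd, hqdn]; ring
    have hD1 : (2 * (q ^ ℓ * q⁻¹) * (q ^ 2 - 1) * (as0 - θs0)) ≠ 0 :=
      mul_ne_zero (mul_ne_zero (mul_ne_zero hchar
        (mul_ne_zero haℓ (inv_ne_zero hq))) hq2) hs
    have hD2 : (2 * (-(q ^ ℓ)⁻¹) * (q ^ 2 - 1) * (as0 - θs0)) ≠ 0 :=
      mul_ne_zero (mul_ne_zero (mul_ne_zero hchar
        (neg_ne_zero.mpr (inv_ne_zero haℓ))) hq2) hs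
    rw [hden, hθt, hθt, hK, hK, hpow2, hpow3, hpow1]
    rw [div_eq_div_iff hts hqp]
    apply mul_left_cancel₀ (mul_ne_zero hD1 hD2)
    linear_combination
      ((q + 1) * (-(q ^ ℓ - 1)) * ((q + 1) * (q ^ ℓ * q⁻¹ + 1) * ζ
          - (q - 1) * (q ^ ℓ * q⁻¹ - 1) * (as0 - θs0) * (θ0 - θd))
        * (2 * (-(q ^ ℓ)⁻¹) * (q ^ 2 - 1) * (as0 - θs0))) * (mul_inv_cancel₀ hD1)
      + ((q + 1) * (-(q * (q ^ ℓ)⁻¹) - 1) * ((q + 1) * (-(q ^ ℓ)⁻¹ + 1) * ζ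
          - (q - 1) * (-(q ^ ℓ)⁻¹ - 1) * (as0 - θs0) * (θ0 - θd))
        * (2 * (q ^ ℓ * q⁻¹) * (q ^ 2 - 1) * (as0 - θs0))) * (mul_inv_cancel₀ hD2)
      + ((4) * (q ^ ℓ) * (as0 - θs0) * ζ + (2) * (q ^ ℓ) * (q ^ ℓ)⁻¹ * (as0 - θs0) * ζ + (-2) * (q ^ ℓ) * (q ^ ℓ)⁻¹ * (as0 - θs0) ^ 2 * (θ0 - θd) + (-2) * (q ^ ℓ) * (q ^ ℓ)⁻¹ ^ 2 * (as0 - θs0) * ζ + (2) * (q ^ ℓ) * (q ^ ℓ)⁻¹ ^ 2 * (as0 - θs0) ^ 2 * (θ0 - θd) + (-4) * (q ^ ℓ) ^ 2 * (q ^ ℓ)⁻¹ * (as0 - θs0) * ζ + (4) * q * (q ^ ℓ) * (as0 - θs0) ^ 2 * (θ0 - θd) + (4) * q * (q ^ ℓ) * (q ^ ℓ)⁻¹ * (as0 - θs0) * ζ + (-4) * q * (q ^ ℓ) * (q ^ ℓ)⁻¹ ^ 2 * (as0 - θs0) * ζ + (-4) * q * (q ^ ℓ) ^ 2 * (q ^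 ℓ)⁻¹ * (as0 - θs0) ^ 2 * (θ0 - θd) + (-4) * q ^ 2 * (q ^ ℓ) * (as0 - θs0) * ζ + (4) * q ^ 2 * (q ^ ℓ) * (q ^ ℓ)⁻¹ * (as0 - θs0) ^ 2 * (θ0 - θd) + (-4) * q ^ 2 * (q ^ ℓ) * (q ^ ℓ)⁻¹ ^ 2 * (as0 - θs0) ^ 2 * (θ0 - θd) + (4) * q ^ 2 * (q ^ ℓ) ^ 2 * (q ^ ℓ)⁻¹ * (as0 - θs0) * ζ + (-2) * q ^ 3 * (q ^ ℓ) * (as0 - θs0) * ζ + (-2) * q ^ 3 * (q ^ ℓ) * (as0 - θs0) ^ 2 * (θ0 - θd) + (-4) * q ^ 3 * (q ^ ℓ) * (q ^ ℓ)⁻¹ * (as0 - θs0) * ζ + (4) * q ^ 3 * (q ^ ℓ) * (q ^ ℓ)⁻¹ ^ 2 * (as0 - θs0) * ζ + (2) * q ^ 3 * (q ^ ℓ) ^ 2 * (q ^ ℓ)⁻¹ * (as0 - θs0) * ζ + (2) * q ^ 3 * (q ^ ℓ) ^ 2 * (q ^ ℓ)⁻¹ * (as0 - θs0) ^ 2 *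 (θ0 - θd) + (-2) * q ^ 4 * (q ^ ℓ) * (q ^ ℓ)⁻¹ * (as0 - θs0) * ζ + (-2) * q ^ 4 * (q ^ ℓ) * (q ^ ℓ)⁻¹ * (as0 - θs0) ^ 2 * (θ0 - θd) + (2) * q ^ 4 * (q ^ ℓ) * (q ^ ℓ)⁻¹ ^ 2 * (as0 - θs0) * ζ + (2) * q ^ 4 * (q ^ ℓ) * (q ^ ℓ)⁻¹ ^ 2 * (as0 - θs0) ^ 2 * (θ0 - θd)) * (mul_inv_cancel₀ hq)
      + ((-2) * (q ^ ℓ)⁻¹ * (as0 - θs0) * ζ + (2) * (q ^ ℓ)⁻¹ * (as0 - θs0) ^ 2 * (θ0 - θd) + (-4) * (q ^ ℓ) * (as0 - θs0) * ζ + (-2) * (q⁻¹) * (q ^ ℓ) * (as0 - θs0) * ζ + (2) * (q⁻¹) * (q ^ ℓ) * (as0 - θs0) ^ 2 * (θ0 - θd) + (-4) * q * (q ^ ℓ)⁻¹ * (as0 - θs0) * ζ + (-4) * q * (q ^ ℓ) * (as0 - θs0) ^ 2 * (θ0 - θd) + (-4) * q ^ 2 * (q ^ ℓ)⁻¹ *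 (as0 - θs0) ^ 2 * (θ0 - θd) + (4) * q ^ 2 * (q ^ ℓ) * (as0 - θs0) * ζ + (4) * q ^ 3 * (q ^ ℓ)⁻¹ * (as0 - θs0) * ζ + (2) * q ^ 3 * (q ^ ℓ) * (as0 - θs0) * ζ + (2) * q ^ 3 * (q ^ ℓ) * (as0 - θs0) ^ 2 * (θ0 - θd) + (2) * q ^ 4 * (q ^ ℓ)⁻¹ * (as0 - θs0) * ζ + (2) * q ^ 4 * (q ^ ℓ)⁻¹ * (as0 - θs0) ^ 2 * (θ0 - θd)) * (mul_inv_cancel₀ haℓ)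
  rw [Finset.sum_congr rfl hterm, ← Finset.sum_div, sum_aux12 q hq hqm i]
  have hai : q ^ i ≠ 0 := pow_ne_zero _ hq
  have hq2' : (q : F) ^ 2 ≠ 0 := pow_ne_zero _ hq
  have hpow6 : q ^ ((i:ℤ) - 2) = q ^ i * (q ^ 2)⁻¹ := by
    have e : (i:ℤ) - 2 = (i:ℤ) + (-(2:ℤ)) := by ring
    rw [e, zpow_add₀ hq, zpow_neg, zpow_natCast]
    norm_num
  rw [hpow6, div_div, div_eq_div_iff (mul_ne_zero hqm hqp)
    (mul_ne_zero (mul_ne_zero hai (inv_ne_zero hq2')) hq2)]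
  linear_combination
    ((1 : F) * q ^ 2 * (q ^ 2)⁻¹ + (-1) * q ^ 2 * (q ^ i) * (q ^ 2)⁻¹ + (-1) * q ^ 4 * (q ^ 2)⁻¹ + (1) * q ^ 4 * (q ^ i) * (q ^ 2)⁻¹) * (mul_inv_cancel₀ hai)
    + ((1 : F) + (-1) * (q ^ i) + (-1) * q ^ 2 + (1) * q ^ 2 * (q ^ i)) * (mul_inv_cancel₀ hq2')
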